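/- Let (t, [·,·], r) be a finite-dimensional complex Lie algebra with r ∈ Λ²t a nondegenerate solution of the classical Yang–Baxter equation, with cobracket δ(x) := [x⊗1 + 1⊗x, r]. Then ker δ = {x ∈ t : [x⊗1 + 1⊗x, r] = 0} is a Lie subalgebra of t of dimension equal to dim(t/[t,t]). -/

import Mathlib

open TensorProduct Module

noncomputable section

variable {t : Type} [LieRing t] [LieAlgebra ℂ t]

attribute [local instance 100] LieRing.ofAssociativeRing

/-- The bracket `t ⊗ t →ₗ t`, `x ⊗ y ↦ ⁅x, y⁆`. -/
def brkt : t ⊗[ℂ] t →ₗ[ℂ] t :=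
  TensorProduct.lift (LieAlgebra.ad ℂ t).toLinearMap

/-- The cobracket `δ(x) = [x ⊗ 1 + 1 ⊗ x, r] = (ad x ⊗ id + id ⊗ ad x)(r)`. -/
def cobracket (r : t ⊗[ℂ] t) : t →ₗ[ℂ] t ⊗[ℂ] t :=
  (((LinearMap.rTensorHom t + LinearMap.lTensorHom t)
      ∘ₗ (LieAlgebra.ad ℂ t).toLinearMap).flip) r

/-- `(a ⊗ b) ⊗ (a' ⊗ b') ↦ ⁅a,a'⁆ ⊗ b ⊗ b'`, giving `[r₁₂, r₁₃]` on `r ⊗ r`. -/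
def c1213 : (t ⊗[ℂ] t) ⊗[ℂ] (t ⊗[ℂ] t) →ₗ[ℂ] t ⊗[ℂ] (t ⊗[ℂ] t) :=
  TensorProduct.map brkt LinearMap.id
    ∘ₗ (TensorProduct.tensorTensorTensorComm ℂ t t t t).toLinearMap

/-- `(a ⊗ b) ⊗ (a' ⊗ b') ↦ a ⊗ ⁅b,a'⁆ ⊗ b'`, giving `[r₁₂, r₂₃]` on `r ⊗ r`. -/
def c1223 : (t ⊗[ℂ] t) ⊗[ℂ] (t ⊗[ℂ] t) →ₗ[ℂ] t ⊗[ℂ] (t ⊗[ℂ] t) :=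
  TensorProduct.map LinearMap.id
      (TensorProduct.map brkt LinearMap.id
        ∘ₗ (TensorProduct.assoc ℂ t t t).symm.toLinearMap)
    ∘ₗ (TensorProduct.assoc ℂ t t (t ⊗[ℂ] t)).toLinearMap

/-- `(a ⊗ b) ⊗ (a' ⊗ b') ↦ a ⊗ a' ⊗ ⁅b,b'⁆`, giving `[r₁₃, r₂₃]` on `r ⊗ r`. -/
def c1323 : (t ⊗[ℂ] t) ⊗[ℂ] (t ⊗[ℂ] t) →ₗ[ℂ] t ⊗[ℂ] (t ⊗[ℂ] t) :=
  (TensorProduct.assoc ℂ t t t).toLinearMap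
    ∘ₗ TensorProduct.map LinearMap.id brkt
    ∘ₗ (TensorProduct.tensorTensorTensorComm ℂ t t t t).toLinearMap

-- basic helpers
def phi2 (α β : Dual ℂ t) : t ⊗[ℂ] t →ₗ[ℂ] ℂ :=
  TensorProduct.lift (α.smulRight β)

def phi3 (α β γ : Dual ℂ t) : t ⊗[ℂ] (t ⊗[ℂ] t) →ₗ[ℂ] ℂ :=
  TensorProduct.lift (α.smulRight (phi2 β γ))

def rho' (α : Dual ℂ t) : t ⊗[ℂ] t →ₗ[ℂ] t :=
  TensorProduct.lift (α.smulRight (LinearMap.id))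

def psi (β : Dual ℂ t) : t ⊗[ℂ] t →ₗ[ℂ] t :=
  (TensorProduct.lift ((β.smulRight (LinearMap.id : t →ₗ[ℂ] t)).flip))

example (α β : Dual ℂ t) (a b : t) : phi2 α β (a ⊗ₜ b) = α a * β b := by
  simp [phi2, smul_eq_mul]

example (β : Dual ℂ t) (a b : t) : psi β (a ⊗ₜ b) = β b • a := by
  simp [psi]

example (α : Dual ℂ t) (a b : t) : rho' α (a ⊗ₜ b) = α a • b := by
  simp [rho']

lemma cobracket_apply (r : t ⊗[ℂ] t) (x : t) :
    cobracket r x = LinearMap.rTensor t (LieAlgebra.ad ℂ t x) r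
      + LinearMap.lTensor t (LieAlgebra.ad ℂ t x) r := rfl

open LieAlgebra LinearMap in
lemma cobracket_lie (r : t ⊗[ℂ] t) (x y : t) :
    cobracket r ⁅x, y⁆ =
      (rTensor t (ad ℂ t x) + lTensor t (ad ℂ t x)) (cobracket r y)
      - (rTensor t (ad ℂ t y) + lTensor t (ad ℂ t y)) (cobracket r x) := by
  have had : ad ℂ t ⁅x, y⁆ = ad ℂ t x ∘ₗ ad ℂ t y - ad ℂ t y ∘ₗ ad ℂ t x := by
    rw [LieHom.map_lie]; rfl
  have h1 : rTensor t (ad ℂ t x) (lTensor t (ad ℂ t y) r)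
      = lTensor t (ad ℂ t y) (rTensor t (ad ℂ t x) r) := by
    rw [← LinearMap.comp_apply, ← LinearMap.comp_apply, rTensor_comp_lTensor,
      lTensor_comp_rTensor]
  have h2 : rTensor t (ad ℂ t y) (lTensor t (ad ℂ t x) r)
      = lTensor t (ad ℂ t x) (rTensor t (ad ℂ t y) r) := by
    rw [← LinearMap.comp_apply, ← LinearMap.comp_apply, rTensor_comp_lTensor,
      lTensor_comp_rTensor]
  simp only [cobracket_apply, had, rTensor_sub, lTensor_sub, rTensor_comp, lTensor_comp,
    map_add, LinearMap.add_apply, LinearMap.sub_apply, LinearMap.comp_apply, h1, h2]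
  abel

lemma phi2_rho' (α β : Dual ℂ t) (u : t ⊗[ℂ] t) : phi2 α β u = β (rho' α u) := by
  induction u using TensorProduct.induction_on with
  | zero => simp
  | tmul a b => simp [phi2, rho', smul_eq_mul]
  | add u v hu hv => simp [map_add, hu, hv]

lemma rho'_comm (β : Dual ℂ t) (u : t ⊗[ℂ] t) :
    rho' β ((TensorProduct.comm ℂ t t) u) = psi β u := by
  induction u using TensorProduct.induction_on with
  | zero => simp
  | tmul a b => simp [rho', psi]
  | add u v hu hv => simp [map_add, hu, hv]

lemma phi2_rTensor (α β : Dual ℂ t) (f : t →ₗ[ℂ] t) (u : t ⊗[ℂ] t) :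
    phi2 α β (LinearMap.rTensor t f u) = phi2 (α ∘ₗ f) β u := by
  induction u using TensorProduct.induction_on with
  | zero => simp
  | tmul a b => simp [phi2]
  | add u v hu hv => simp [map_add, hu, hv]

lemma phi2_lTensor (α β : Dual ℂ t) (f : t →ₗ[ℂ] t) (u : t ⊗[ℂ] t) :
    phi2 α β (LinearMap.lTensor t f u) = phi2 α (β ∘ₗ f) u := by
  induction u using TensorProduct.induction_on with
  | zero => simp
  | tmul a b => simp [phi2]
  | add u v hu hv => simp [map_add, hu, hv]

lemma phi3_c1213 (α β γ : Dual ℂ t) (u v : t ⊗[ℂ] t) :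
    phi3 α β γ (c1213 (u ⊗ₜ v)) = α ⁅psi β u, psi γ v⁆ := by
  induction u using TensorProduct.induction_on with
  | zero => simp [zero_tmul]
  | tmul a b =>
    induction v using TensorProduct.induction_on with
    | zero => simp [tmul_zero]
    | tmul a' b' =>
      simp [c1213, phi3, phi2, psi, brkt, TensorProduct.lift.tmul, smul_eq_mul]
      ring
    | add v w hv hw => simp only [tmul_add, map_add, hv, hw, lie_add, add_lie,
        TensorProduct.tmul_add]
  | add u w hu hw => simp only [add_tmul, map_add, hu, hw, add_lie, lie_add]

lemma phi3_c1223 (α β γ : Dual ℂ t) (u v : t ⊗[ℂ] t) :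
    phi3 α β γ (c1223 (u ⊗ₜ v)) = β ⁅rho' α u, psi γ v⁆ := by
  induction u using TensorProduct.induction_on with
  | zero => simp [zero_tmul]
  | tmul a b =>
    induction v using TensorProduct.induction_on with
    | zero => simp [tmul_zero]
    | tmul a' b' =>
      simp [c1223, phi3, phi2, psi, rho', brkt, TensorProduct.lift.tmul, smul_eq_mul]
      ring
    | add v w hv hw => simp only [tmul_add, map_add, hv, hw, lie_add, add_lie,
        TensorProduct.tmul_add]
  | add u w hu hw => simp only [add_tmul, map_add, hu, hw, add_lie, lie_add]

lemma phi3_c1323 (α β γ : Dual ℂ t) (u v : t ⊗[ℂ] t) :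
    phi3 α β γ (c1323 (u ⊗ₜ v)) = γ ⁅rho' α u, rho' β v⁆ := by
  induction u using TensorProduct.induction_on with
  | zero => simp [zero_tmul]
  | tmul a b =>
    induction v using TensorProduct.induction_on with
    | zero => simp [tmul_zero]
    | tmul a' b' =>
      simp [c1323, phi3, phi2, rho', brkt, TensorProduct.lift.tmul, smul_eq_mul]
      ring
    | add v w hv hw => simp only [tmul_add, map_add, hv, hw, lie_add, add_lie,
        TensorProduct.tmul_add]
  | add u w hu hw => simp only [add_tmul, map_add, hu, hw, add_lie, lie_add]

lemma dualDistrib_eq_phi2 (α β : Dual ℂ t) (u : t ⊗[ℂ] t) :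
    TensorProduct.dualDistrib ℂ t t (α ⊗ₜ β) u = phi2 α β u := by
  induction u using TensorProduct.induction_on with
  | zero => simp
  | tmul a b => simp [TensorProduct.dualDistrib_apply, phi2, smul_eq_mul]
  | add u v hu hv => simp [map_add, hu, hv]

lemma tensor_eq_zero_of_phi2 [FiniteDimensional ℂ t] (u : t ⊗[ℂ] t)
    (h : ∀ α β : Dual ℂ t, phi2 α β u = 0) : u = 0 := by
  have key : ∀ w : Dual ℂ t ⊗[ℂ] Dual ℂ t, TensorProduct.dualDistrib ℂ t t w u = 0 := by
    intro w
    induction w using TensorProduct.induction_on with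
    | zero => simp
    | tmul α β => rw [dualDistrib_eq_phi2]; exact h α β
    | add w₁ w₂ h1 h2 => simp [map_add, LinearMap.add_apply, h1, h2]
  rw [← Module.forall_dual_apply_eq_zero_iff ℂ]
  intro f
  obtain ⟨w, rfl⟩ := (TensorProduct.dualDistribEquiv ℂ t t).surjective f
  exact key w

lemma phi2_comm (α β : Dual ℂ t) (u : t ⊗[ℂ] t) :
    phi2 α β ((TensorProduct.comm ℂ t t) u) = phi2 β α u := by
  induction u using TensorProduct.induction_on with
  | zero => simp
  | tmul a b => simp [phi2, smul_eq_mul]; ring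
  | add u v hu hv => simp [map_add, hu, hv]


/-- Let `t` be a finite-dimensional complex Lie algebra and `r ∈ Λ²t` a nondegenerate
solution of the classical Yang–Baxter equation, with cobracket
`δ(x) = [x ⊗ 1 + 1 ⊗ x, r]`.  Then `ker δ` is a Lie subalgebra of `t` of dimension
equal to `dim (t/[t,t])`. -/
theorem ker_cobracket_subalgebra_dim [FiniteDimensional ℂ t]
    (r : t ⊗[ℂ] t)
    (skew : (TensorProduct.comm ℂ t t) r = - r)
    (cybe : c1213 (r ⊗ₜ[ℂ] r) + c1223 (r ⊗ₜ[ℂ] r) + c1323 (r ⊗ₜ[ℂ] r) = 0)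
    (nondeg : Function.Bijective
      (fun α : Module.Dual ℂ t => (TensorProduct.lid ℂ t) (LinearMap.rTensor t α r))) :
    (∀ x y : t, x ∈ LinearMap.ker (cobracket r) → y ∈ LinearMap.ker (cobracket r) →
      ⁅x, y⁆ ∈ LinearMap.ker (cobracket r))
    ∧ Module.finrank ℂ (LinearMap.ker (cobracket r))
        = Module.finrank ℂ (t ⧸ Submodule.span ℂ {x : t | ∃ a b : t, ⁅a, b⁆ = x}) := by
  constructor
  · intro x y hx hy
    rw [LinearMap.mem_ker] at *
    rw [cobracket_lie, hx, hy, map_zero, map_zero, sub_zero]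
  -- dimension part
  set D := Submodule.span ℂ {x : t | ∃ a b : t, ⁅a, b⁆ = x} with hD
  -- the map ρ
  set ρ : Dual ℂ t →ₗ[ℂ] t :=
    (TensorProduct.lid ℂ t).toLinearMap ∘ₗ ((LinearMap.rTensorHom t).flip r) with hρdef
  have hbij : Function.Bijective ρ := nondeg
  have hρ : ∀ α : Dual ℂ t, ρ α = rho' α r := by
    intro α
    have : ∀ u : t ⊗[ℂ] t, (TensorProduct.lid ℂ t) (LinearMap.rTensor t α u) = rho' α u := by
      intro u
      induction u using TensorProduct.induction_on with
      | zero => simp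
      | tmul a b => simp [rho']
      | add u v hu hv => simp [map_add, hu, hv]
    exact this r
  have hpsi : ∀ β : Dual ℂ t, psi β r = - rho' β r := by
    intro β
    rw [← rho'_comm, skew, map_neg]
  -- skew pairing
  have hpair : ∀ γ β : Dual ℂ t, β (rho' γ r) = - γ (rho' β r) := by
    intro γ β
    rw [← phi2_rho', ← phi2_rho']
    have h := phi2_comm γ β r
    rw [skew, map_neg] at h
    linear_combination -h
  -- pairing of the cobracket
  have L1 : ∀ (α β : Dual ℂ t) (x : t),
      phi2 α β (cobracket r x) = β ⁅x, rho' α r⁆ - α ⁅x, rho' β r⁆ := by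
    intro α β x
    rw [cobracket_apply, map_add, phi2_rTensor, phi2_lTensor, phi2_rho', phi2_rho',
      hpair (α ∘ₗ LieAlgebra.ad ℂ t x) β]
    simp only [LinearMap.comp_apply, LieHom.coe_toLinearMap, LieAlgebra.ad_apply]
    ring
  -- the cocycle identity from CYBE
  have coc : ∀ α β γ : Dual ℂ t,
      α ⁅rho' β r, rho' γ r⁆ - β ⁅rho' α r, rho' γ r⁆ + γ ⁅rho' α r, rho' β r⁆ = 0 := by
    intro α β γ
    have h0 : phi3 α β γ (c1213 (r ⊗ₜ[ℂ] r) + c1223 (r ⊗ₜ[ℂ] r) + c1323 (r ⊗ₜ[ℂ] r)) = 0 := by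
      rw [cybe, map_zero]
    rw [map_add, map_add, phi3_c1213, phi3_c1223, phi3_c1323, hpsi, hpsi] at h0
    simp only [lie_neg, neg_lie, neg_neg, map_neg] at h0
    linear_combination h0
  -- identification of the kernel
  have hker : LinearMap.ker (cobracket r) = Submodule.map ρ D.dualAnnihilator := by
    ext x
    simp only [LinearMap.mem_ker, Submodule.mem_map]
    constructor
    · intro hx
      obtain ⟨ξ, hξx⟩ := hbij.2 x
      refine ⟨ξ, ?_, hξx⟩
      rw [Submodule.mem_dualAnnihilator]
      intro w hw
      induction hw using Submodule.span_induction with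
      | mem w hw =>
        obtain ⟨a, b, rfl⟩ := hw
        obtain ⟨α, hα⟩ := hbij.2 a
        obtain ⟨β, hβ⟩ := hbij.2 b
        have hc := coc ξ α β
        simp only [← hρ] at hc
        rw [hξx, hα, hβ] at hc
        have hL := L1 α β x
        rw [hx, map_zero] at hL
        simp only [← hρ] at hL
        rw [hα, hβ] at hL
        linear_combination hc + hL
      | zero => simp
      | add w₁ w₂ _ _ h1 h2 => simp [map_add, h1, h2]
      | smul c w _ h1 => simp [map_smul, h1]
    · rintro ⟨ξ, hξ, rfl⟩
      apply tensor_eq_zero_of_phi2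
      intro α β
      rw [L1, hρ]
      have hc := coc ξ α β
      have hmem : ⁅rho' α r, rho' β r⁆ ∈ D :=
        Submodule.subset_span ⟨_, _, rfl⟩
      rw [Submodule.mem_dualAnnihilator] at hξ
      have hz := hξ _ hmem
      linear_combination hc - hz
  rw [hker]
  rw [show Submodule.map ρ D.dualAnnihilator
      = Submodule.map (LinearEquiv.ofBijective ρ hbij : Dual ℂ t →ₗ[ℂ] t) D.dualAnnihilator
      from rfl, LinearEquiv.finrank_map_eq]
  exact (LinearEquiv.finrank_eq (Subspace.quotEquivAnnihilator D)).symm
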